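/- arXiv:1803.01075 — 2 statements merged into one kernel-verified Lean document; each statement's English description precedes it below -/
import Mathlib

section
/- Let Q be an inverse quantal frame and X a Q-sheaf. Then any set of Hilbert sections of X which is join-dense in X (every element of X is a join of elements of the set) is a Hilbert basis of X. -/
/-- A unital involutive quantale: a complete lattice with an associative
multiplication preserving arbitrary joins in each variable, a unit `e`, and a
join-preserving involution. -/
structure InvQuantale (Q : Type*) [CompleteLattice Q] where
  mul : Q → Q → Q
  e : Q
  star : Q → Q
  mul_assoc : ∀ a b c, mul (mul a b) c = mul a (mul b c)
  sSup_mul : ∀ (S : Set Q) (b : Q), mul (sSup S) b = ⨆ a ∈ S, mul a b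
  mul_sSup : ∀ (a : Q) (S : Set Q), mul a (sSup S) = ⨆ b ∈ S, mul a b
  e_mul : ∀ a, mul e a = a
  mul_e : ∀ a, mul a e = a
  star_star : ∀ a, star (star a) = a
  star_mul : ∀ a b, star (mul a b) = mul (star b) (star a)
  star_sSup : ∀ S : Set Q, star (sSup S) = ⨆ a ∈ S, star a

/-- The set of partial units of a quantale. -/
def InvQuantale.PU {Q : Type*} [CompleteLattice Q] (Qs : InvQuantale Q) : Set Q :=
  {s | Qs.mul s (Qs.star s) ≤ Qs.e ∧ Qs.mul (Qs.star s) s ≤ Qs.e}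

/-- An inverse quantal frame: a unital involutive quantale which is a frame,
has a stable support, and whose partial units join to the top. -/
structure InverseQuantalFrame (Q : Type*) [Order.Frame Q] extends InvQuantale Q where
  supp : Q → Q
  supp_le_e : ∀ a, supp a ≤ e
  supp_sSup : ∀ S : Set Q, supp (sSup S) = ⨆ a ∈ S, supp a
  supp_le_mul_star : ∀ a, supp a ≤ mul a (star a)
  le_supp_mul : ∀ a, a ≤ mul (supp a) a
  supp_stable : ∀ b a, b ≤ e → supp (mul b a) = mul b (supp a)
  sSup_PU : sSup {s | mul s (star s) ≤ e ∧ mul (star s) s ≤ e} = ⊤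

/-- A left module over a quantale: a complete lattice with a unital associative
action preserving arbitrary joins in each variable. -/
structure QuantaleModule {Q : Type*} [CompleteLattice Q] (Qs : InvQuantale Q)
    (X : Type*) [CompleteLattice X] where
  act : Q → X → X
  act_mul : ∀ a b x, act (Qs.mul a b) x = act a (act b x)
  act_e : ∀ x, act Qs.e x = x
  sSup_act : ∀ (S : Set Q) (x : X), act (sSup S) x = ⨆ a ∈ S, act a x
  act_sSup : ∀ (a : Q) (S : Set X), act a (sSup S) = ⨆ x ∈ S, act a x

/-- A pre-Hilbert module over a quantale. -/
structure PreHilbertModule {Q : Type*} [CompleteLattice Q] (Qs : InvQuantale Q)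
    (X : Type*) [CompleteLattice X] extends QuantaleModule Qs X where
  inner : X → X → Q
  inner_act : ∀ a x y, inner (act a x) y = Qs.mul a (inner x y)
  sSup_inner : ∀ (S : Set X) (y : X), inner (sSup S) y = ⨆ x ∈ S, inner x y
  inner_star : ∀ x y, inner x y = Qs.star (inner y x)

namespace PreHilbertModule

variable {Q X : Type*} [CompleteLattice Q] [CompleteLattice X] {Qs : InvQuantale Q}

/-- A Hilbert section: `⟨x,s⟩s ≤ x` for all `x`. -/
def IsHilbertSection (H : PreHilbertModule Qs X) (s : X) : Prop :=
  ∀ x, H.act (H.inner x s) s ≤ x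

/-- A regular element: `⟨s,s⟩s = s`. -/
def IsRegularSection (H : PreHilbertModule Qs X) (s : X) : Prop :=
  H.act (H.inner s s) s = s

/-- A Hilbert basis: `x = ⋁_{t ∈ S} ⟨x,t⟩t` for all `x`. -/
def IsHilbertBasis (H : PreHilbertModule Qs X) (S : Set X) : Prop :=
  ∀ x, x = ⨆ t ∈ S, H.act (H.inner x t) t

/-- Non-degeneracy of the inner product. -/
def Nondegenerate (H : PreHilbertModule Qs X) : Prop :=
  ∀ x y, (∀ z, H.inner x z = H.inner y z) → x = y

end PreHilbertModule

/-- A `Q`-locale over an inverse quantal frame: a module which is a frame and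
satisfies the anchor condition. -/
structure QLocale {Q : Type*} [Order.Frame Q] (Qf : InverseQuantalFrame Q)
    (X : Type*) [Order.Frame X] extends QuantaleModule Qf.toInvQuantale X where
  anchor : ∀ b x, b ≤ Qf.e → act b x = act b ⊤ ⊓ x

/-- A `Q`-sheaf over an inverse quantal frame: a pre-Hilbert module which is a
frame, satisfies the anchor condition, and has a Hilbert basis. -/
structure QSheaf {Q : Type*} [Order.Frame Q] (Qf : InverseQuantalFrame Q)
    (X : Type*) [Order.Frame X] extends PreHilbertModule Qf.toInvQuantale X where
  anchor : ∀ b x, b ≤ Qf.e → act b x = act b ⊤ ⊓ x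
  hasBasis : ∃ S : Set X, ∀ x, x = ⨆ t ∈ S, act (inner x t) t

namespace QSheaf

variable {Q X : Type*} [Order.Frame Q] [Order.Frame X] {Qf : InverseQuantalFrame Q}

/-- The support `ς_X(x) = ⟨x,x⟩ ∧ e` of a `Q`-sheaf. -/
def sppX (H : QSheaf Qf X) (x : X) : Q := H.inner x x ⊓ Qf.e

/-- A local section: `ς_X(x)s = x` for all `x ≤ s`. -/
def IsLocalSection (H : QSheaf Qf X) (s : X) : Prop :=
  ∀ x ≤ s, H.act (H.sppX x) s = x

/-- A principal section: a local section with `⟨s,s⟩ ≤ e`. -/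
def IsPrincipalSection (H : QSheaf Qf X) (s : X) : Prop :=
  H.IsLocalSection s ∧ H.inner s s ≤ Qf.e

/-- A right local section: `x = s ∧ 1_Q·x` for all `x ≤ s`. -/
def IsRightLocalSection (H : QSheaf Qf X) (s : X) : Prop :=
  ∀ x ≤ s, x = s ⊓ H.act ⊤ x

/-- A local bisection: simultaneously a local section and a right local section. -/
def IsBisection (H : QSheaf Qf X) (s : X) : Prop :=
  H.IsLocalSection s ∧ H.IsRightLocalSection s

end QSheaf


section AuxLemmas

variable {Q : Type*} [CompleteLattice Q] {Qs : InvQuantale Q}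

lemma InvQuantale.mul_mono_left (Qs : InvQuantale Q) {a b : Q} (h : a ≤ b) (c : Q) :
    Qs.mul a c ≤ Qs.mul b c := by
  have h1 := Qs.sSup_mul {a, b} c
  simp only [sSup_insert, sSup_singleton, iSup_insert, iSup_singleton] at h1
  rw [sup_eq_right.mpr h] at h1
  rw [h1]; exact le_sup_left

lemma InvQuantale.mul_mono_right (Qs : InvQuantale Q) (a : Q) {b c : Q} (h : b ≤ c) :
    Qs.mul a b ≤ Qs.mul a c := by
  have h1 := Qs.mul_sSup a {b, c}
  simp only [sSup_insert, sSup_singleton, iSup_insert, iSup_singleton] at h1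
  rw [sup_eq_right.mpr h] at h1
  rw [h1]; exact le_sup_left

/-- `a ≤ a a* a` in an inverse quantal frame. -/
lemma InverseQuantalFrame.le_mul_star_mul {Q : Type*} [Order.Frame Q]
    (Qf : InverseQuantalFrame Q) (a : Q) :
    a ≤ Qf.mul a (Qf.mul (Qf.star a) a) := by
  calc a ≤ Qf.mul (Qf.supp a) a := Qf.le_supp_mul a
    _ ≤ Qf.mul (Qf.mul a (Qf.star a)) a :=
        Qf.toInvQuantale.mul_mono_left (Qf.supp_le_mul_star a) a
    _ = Qf.mul a (Qf.mul (Qf.star a) a) := Qf.mul_assoc _ _ _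

variable {X : Type*} [CompleteLattice X]

lemma QuantaleModule.act_mono_left (M : QuantaleModule Qs X) {a b : Q} (h : a ≤ b)
    (x : X) : M.act a x ≤ M.act b x := by
  have h1 := M.sSup_act {a, b} x
  simp only [sSup_insert, sSup_singleton, iSup_insert, iSup_singleton] at h1
  rw [sup_eq_right.mpr h] at h1
  rw [h1]; exact le_sup_left

lemma QuantaleModule.act_mono_right (M : QuantaleModule Qs X) (a : Q) {x y : X}
    (h : x ≤ y) : M.act a x ≤ M.act a y := by
  have h1 := M.act_sSup a {x, y}
  simp only [sSup_insert, sSup_singleton, iSup_insert, iSup_singleton] at h1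
  rw [sup_eq_right.mpr h] at h1
  rw [h1]; exact le_sup_left

lemma PreHilbertModule.inner_mono_left (H : PreHilbertModule Qs X) {x y : X}
    (h : x ≤ y) (z : X) : H.inner x z ≤ H.inner y z := by
  have h1 := H.sSup_inner {x, y} z
  simp only [sSup_insert, sSup_singleton, iSup_insert, iSup_singleton] at h1
  rw [sup_eq_right.mpr h] at h1
  rw [h1]; exact le_sup_left

/-- Key lemma: in a Q-sheaf, `x ≤ ⟨x,x⟩ x`. -/
lemma QSheaf.le_act_inner_self {Q X : Type*} [Order.Frame Q] [Order.Frame X]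
    {Qf : InverseQuantalFrame Q} (H : QSheaf Qf X) (x : X) :
    x ≤ H.act (H.inner x x) x := by
  obtain ⟨B, hB⟩ := H.hasBasis
  conv_lhs => rw [hB x]
  apply iSup_le; intro u; apply iSup_le; intro hu
  set a := H.inner x u with ha
  have hle : H.act a u ≤ x := by
    conv_rhs => rw [hB x]
    exact le_iSup_of_le u (le_iSup_of_le hu le_rfl)
  -- a ≤ a a* a
  have h1 : a ≤ Qf.mul a (Qf.mul (Qf.star a) a) := Qf.le_mul_star_mul a
  have hstar : Qf.star a = H.inner u x := by rw [H.inner_star u x]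
  calc H.act a u ≤ H.act (Qf.mul a (Qf.mul (Qf.star a) a)) u :=
        H.toQuantaleModule.act_mono_left h1 u
    _ = H.act a (H.act (Qf.star a) (H.act a u)) := by
        rw [H.act_mul, H.act_mul]
    _ ≤ H.act a (H.act (Qf.star a) x) :=
        H.toQuantaleModule.act_mono_right a
          (H.toQuantaleModule.act_mono_right _ hle)
    _ = H.act (Qf.mul a (Qf.star a)) x := (H.act_mul _ _ _).symm
    _ = H.act (H.inner (H.act a u) x) x := by
        rw [hstar, ← H.inner_act]
    _ ≤ H.act (H.inner x x) x :=
        H.toQuantaleModule.act_mono_left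
          (H.toPreHilbertModule.inner_mono_left hle x) x

end AuxLemmas

/-- In a `Q`-sheaf over an inverse quantal frame, any join-dense
set of Hilbert sections is a Hilbert basis. -/
theorem stmt2 {Q X : Type*} [Order.Frame Q] [Order.Frame X]
    (Qf : InverseQuantalFrame Q) (H : QSheaf Qf X)
    (S : Set X)
    (hsec : ∀ s ∈ S, H.IsHilbertSection s)
    (hdense : ∀ x : X, ∃ T ⊆ S, x = sSup T) :
    H.IsHilbertBasis S := by
  intro x
  apply le_antisymm
  · obtain ⟨T, hTS, hxT⟩ := hdense x
    conv_lhs => rw [hxT]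
    apply sSup_le
    intro t ht
    have htS : t ∈ S := hTS ht
    have htx : t ≤ x := by rw [hxT]; exact le_sSup ht
    calc t ≤ H.act (H.inner t t) t := H.le_act_inner_self t
      _ ≤ H.act (H.inner x t) t :=
          H.toQuantaleModule.act_mono_left
            (H.toPreHilbertModule.inner_mono_left htx t) t
      _ ≤ ⨆ s ∈ S, H.act (H.inner x s) s :=
          le_iSup_of_le t (le_iSup_of_le htS le_rfl)
  · apply iSup_le; intro t; apply iSup_le; intro htS
    exact hsec t htS x
end

section
/- Let Q be an inverse quantal frame, X a Q-sheaf, and s a local section of X. Then the following conditions are equivalent: (1) ⟨s,s⟩ ≤ e; (2) ς_X(s) = ⟨s,s⟩; (3) for all a ∈ Q with as = s one has a·ς_X(s) = ς_X(s); (4) for all a ∈ Q with ς_Q(a*) = ς_X(s) and as = s one has a ≤ e. -/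
namespace Stmt9Aux

section QLemmas

variable {Q : Type*} [Order.Frame Q] (Qf : InverseQuantalFrame Q)

lemma mul_le_mul {a b c d : Q} (h1 : a ≤ b) (h2 : c ≤ d) :
    Qf.mul a c ≤ Qf.mul b d := by
  have hL : Qf.mul a c ≤ Qf.mul b c := by
    have h := Qf.sSup_mul {a, b} c
    rw [sSup_pair, sup_eq_right.mpr h1] at h
    rw [h]
    exact le_iSup₂ (f := fun x (_ : x ∈ ({a, b} : Set Q)) => Qf.mul x c) a (by simp)
  have hR : Qf.mul b c ≤ Qf.mul b d := by
    have h := Qf.mul_sSup b {c, d}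
    rw [sSup_pair, sup_eq_right.mpr h2] at h
    rw [h]
    exact le_iSup₂ (f := fun x (_ : x ∈ ({c, d} : Set Q)) => Qf.mul b x) c (by simp)
  exact le_trans hL hR

lemma star_mono {a b : Q} (h : a ≤ b) : Qf.star a ≤ Qf.star b := by
  have hh := Qf.star_sSup {a, b}
  rw [sSup_pair, sup_eq_right.mpr h] at hh
  rw [hh]
  exact le_iSup₂ (f := fun x (_ : x ∈ ({a, b} : Set Q)) => Qf.star x) a (by simp)

lemma supp_mono {a b : Q} (h : a ≤ b) : Qf.supp a ≤ Qf.supp b := by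
  have hh := Qf.supp_sSup {a, b}
  rw [sSup_pair, sup_eq_right.mpr h] at hh
  rw [hh]
  exact le_iSup₂ (f := fun x (_ : x ∈ ({a, b} : Set Q)) => Qf.supp x) a (by simp)

lemma star_e : Qf.star Qf.e = Qf.e := by
  have h : ∀ a, Qf.star a = Qf.mul (Qf.star a) (Qf.star Qf.e) := by
    intro a
    conv_lhs => rw [← Qf.e_mul a]
    rw [Qf.star_mul]
  refine Eq.symm ?_
  calc Qf.e = Qf.star (Qf.star Qf.e) := (Qf.star_star _).symm
    _ = Qf.mul (Qf.star (Qf.star Qf.e)) (Qf.star Qf.e) := h _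
    _ = Qf.mul Qf.e (Qf.star Qf.e) := by rw [Qf.star_star]
    _ = Qf.star Qf.e := Qf.e_mul _

lemma supp_e : Qf.supp Qf.e = Qf.e := by
  refine le_antisymm (Qf.supp_le_e _) ?_
  have h := Qf.le_supp_mul Qf.e
  rwa [Qf.mul_e] at h

lemma supp_top : Qf.supp (⊤ : Q) = Qf.e :=
  le_antisymm (Qf.supp_le_e _) (by rw [← supp_e Qf]; exact supp_mono Qf le_top)

lemma supp_of_le_e {b : Q} (h : b ≤ Qf.e) : Qf.supp b = b := by
  have hh := Qf.supp_stable b Qf.e h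
  rwa [Qf.mul_e, supp_e, Qf.mul_e] at hh

lemma star_of_le_e {b : Q} (h : b ≤ Qf.e) : Qf.star b = b := by
  have hbe : Qf.star b ≤ Qf.e := by
    have := star_mono Qf h
    rwa [star_e] at this
  have h1 : b ≤ Qf.star b := by
    calc b = Qf.supp b := (supp_of_le_e Qf h).symm
      _ ≤ Qf.mul b (Qf.star b) := Qf.supp_le_mul_star b
      _ ≤ Qf.mul Qf.e (Qf.star b) := mul_le_mul Qf h le_rfl
      _ = Qf.star b := Qf.e_mul _
  refine le_antisymm ?_ h1
  have := star_mono Qf h1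
  rwa [Qf.star_star] at this

lemma mul_star_le_supp {v : Q} (hv : Qf.mul v (Qf.star v) ≤ Qf.e) :
    Qf.mul v (Qf.star v) ≤ Qf.supp v := by
  calc Qf.mul v (Qf.star v) ≤ Qf.mul (Qf.mul (Qf.supp v) v) (Qf.star v) :=
        mul_le_mul Qf (Qf.le_supp_mul v) le_rfl
    _ = Qf.mul (Qf.supp v) (Qf.mul v (Qf.star v)) := Qf.mul_assoc _ _ _
    _ ≤ Qf.mul (Qf.supp v) Qf.e := mul_le_mul Qf le_rfl hv
    _ = Qf.supp v := Qf.mul_e _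

lemma le_c_mul (a : Q) : a ≤ Qf.mul (Qf.mul a (Qf.star a) ⊓ Qf.e) a := by
  calc a ≤ Qf.mul (Qf.supp a) a := Qf.le_supp_mul a
    _ ≤ Qf.mul (Qf.mul a (Qf.star a) ⊓ Qf.e) a :=
        mul_le_mul Qf (le_inf (Qf.supp_le_mul_star a) (Qf.supp_le_e a)) le_rfl

lemma mul_top_top : Qf.mul (⊤ : Q) ⊤ = ⊤ := by
  refine le_antisymm le_top ?_
  calc (⊤:Q) = Qf.mul ⊤ Qf.e := (Qf.mul_e _).symm
    _ ≤ Qf.mul ⊤ ⊤ := mul_le_mul Qf le_rfl le_top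

lemma biSup_mul {ι : Type*} (S : Set ι) (f : ι → Q) (c : Q) :
    Qf.mul (⨆ v ∈ S, f v) c = ⨆ v ∈ S, Qf.mul (f v) c := by
  rw [← sSup_image, Qf.sSup_mul, iSup_image]

lemma mul_top_inf_e_le_supp_of_pu {v : Q} (hv : Qf.mul v (Qf.star v) ≤ Qf.e) :
    Qf.mul v ⊤ ⊓ Qf.e ≤ Qf.supp v := by
  have hdec : Qf.mul v ⊤ =
      ⨆ u ∈ {s : Q | Qf.mul s (Qf.star s) ≤ Qf.e ∧ Qf.mul (Qf.star s) s ≤ Qf.e},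
        Qf.mul v u := by
    rw [← Qf.sSup_PU, Qf.mul_sSup]
  rw [hdec]
  simp_rw [iSup_inf_eq]
  apply iSup₂_le
  intro u hu
  have hde : Qf.mul v u ⊓ Qf.e ≤ Qf.e := inf_le_right
  have hd1 : Qf.mul v u ⊓ Qf.e ≤ Qf.mul (Qf.mul v u ⊓ Qf.e) (Qf.star (Qf.mul v u ⊓ Qf.e)) := by
    calc Qf.mul v u ⊓ Qf.e = Qf.supp (Qf.mul v u ⊓ Qf.e) := (supp_of_le_e Qf hde).symm
      _ ≤ _ := Qf.supp_le_mul_star _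
  have hd2 : Qf.star (Qf.mul v u ⊓ Qf.e) ≤ Qf.mul (Qf.star u) (Qf.star v) := by
    have := star_mono Qf (inf_le_left : Qf.mul v u ⊓ Qf.e ≤ Qf.mul v u)
    rwa [Qf.star_mul] at this
  calc Qf.mul v u ⊓ Qf.e
      ≤ Qf.mul (Qf.mul v u) (Qf.mul (Qf.star u) (Qf.star v)) :=
        le_trans hd1 (mul_le_mul Qf inf_le_left hd2)
    _ = Qf.mul (Qf.mul v (Qf.mul u (Qf.star u))) (Qf.star v) := by
        simp only [Qf.mul_assoc]
    _ ≤ Qf.mul (Qf.mul v Qf.e) (Qf.star v) := mul_le_mul Qf (mul_le_mul Qf le_rfl hu.1) le_rfl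
    _ = Qf.mul v (Qf.star v) := by rw [Qf.mul_e]
    _ ≤ Qf.supp v := mul_star_le_supp Qf hv

lemma mul_top_inf_e_le_supp (a : Q) : Qf.mul a ⊤ ⊓ Qf.e ≤ Qf.supp a := by
  have ha : a = ⨆ v ∈ {s : Q | Qf.mul s (Qf.star s) ≤ Qf.e ∧ Qf.mul (Qf.star s) s ≤ Qf.e},
      a ⊓ v := by
    rw [← inf_sSup_eq, Qf.sSup_PU, inf_top_eq]
  conv_lhs => rw [ha]
  rw [biSup_mul]
  simp_rw [iSup_inf_eq]
  apply iSup₂_le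
  intro v hv
  have hpu : Qf.mul (a ⊓ v) (Qf.star (a ⊓ v)) ≤ Qf.e :=
    le_trans (mul_le_mul Qf inf_le_right (star_mono Qf inf_le_right)) hv.1
  exact le_trans (mul_top_inf_e_le_supp_of_pu Qf hpu) (supp_mono Qf inf_le_left)

lemma supp_eq (a : Q) : Qf.supp a = Qf.mul a (Qf.star a) ⊓ Qf.e := by
  refine le_antisymm (le_inf (Qf.supp_le_mul_star a) (Qf.supp_le_e a)) ?_
  refine le_trans ?_ (mul_top_inf_e_le_supp Qf a)
  exact inf_le_inf_right _ (mul_le_mul Qf le_rfl le_top)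

end QLemmas

section XLemmas

variable {Q X : Type*} [Order.Frame Q] [Order.Frame X]
  (Qf : InverseQuantalFrame Q) (H : QSheaf Qf X)

lemma act_mono {a b : Q} {x y : X} (h1 : a ≤ b) (h2 : x ≤ y) :
    H.act a x ≤ H.act b y := by
  have hL : H.act a x ≤ H.act b x := by
    have h := H.sSup_act {a, b} x
    rw [sSup_pair, sup_eq_right.mpr h1] at h
    rw [h]
    exact le_iSup₂ (f := fun c (_ : c ∈ ({a, b} : Set Q)) => H.act c x) a (by simp)
  have hR : H.act b x ≤ H.act b y := by
    have h := H.act_sSup b {x, y}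
    rw [sSup_pair, sup_eq_right.mpr h2] at h
    rw [h]
    exact le_iSup₂ (f := fun z (_ : z ∈ ({x, y} : Set X)) => H.act b z) x (by simp)
  exact le_trans hL hR

lemma inner_mono_left {x y : X} (h : x ≤ y) (z : X) : H.inner x z ≤ H.inner y z := by
  have hh := H.sSup_inner {x, y} z
  rw [sSup_pair, sup_eq_right.mpr h] at hh
  rw [hh]
  exact le_iSup₂ (f := fun w (_ : w ∈ ({x, y} : Set X)) => H.inner w z) x (by simp)

lemma star_inner (x y : X) : Qf.star (H.inner x y) = H.inner y x := by
  rw [H.inner_star x y, Qf.star_star]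

lemma inner_mono_right (z : X) {x y : X} (h : x ≤ y) : H.inner z x ≤ H.inner z y := by
  rw [← star_inner Qf H x z, ← star_inner Qf H y z]
  exact star_mono Qf (inner_mono_left Qf H h z)

lemma inner_act_right (a : Q) (x y : X) :
    H.inner x (H.act a y) = Qf.mul (H.inner x y) (Qf.star a) := by
  rw [H.inner_star x (H.act a y), H.inner_act, Qf.star_mul, ← H.inner_star]

lemma anchor_le {b : Q} (h : b ≤ Qf.e) (x : X) : H.act b x ≤ x := by
  rw [H.anchor b x h]; exact inf_le_right

lemma act_biSup {ι : Type*} (S : Set ι) (f : ι → Q) (x : X) :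
    H.act (⨆ v ∈ S, f v) x = ⨆ v ∈ S, H.act (f v) x := by
  rw [← sSup_image, H.sSup_act, iSup_image]

lemma inner_biSup {ι : Type*} (S : Set ι) (f : ι → X) (y : X) :
    H.inner (⨆ t ∈ S, f t) y = ⨆ t ∈ S, H.inner (f t) y := by
  rw [← sSup_image, H.sSup_inner, iSup_image]

lemma act_sppX (x : X) : H.act (H.sppX x) x = x := by
  refine le_antisymm (anchor_le Qf H inf_le_right x) ?_
  obtain ⟨S, hS⟩ := H.hasBasis
  conv_lhs => rw [hS x]
  apply iSup₂_le
  intro t ht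
  have hxt : H.act (H.inner x t) t ≤ x := by
    conv_rhs => rw [hS x]
    exact le_iSup₂ (f := fun t (_ : t ∈ S) => H.act (H.inner x t) t) t ht
  have hdec : H.inner x t =
      ⨆ u ∈ {w : Q | Qf.mul w (Qf.star w) ≤ Qf.e ∧ Qf.mul (Qf.star w) w ≤ Qf.e},
        H.inner x t ⊓ u := by
    rw [← inf_sSup_eq, Qf.sSup_PU, inf_top_eq]
  rw [hdec, act_biSup]
  apply iSup₂_le
  intro u hu
  set v := H.inner x t ⊓ u with hv_def
  have hv : v ≤ H.inner x t := inf_le_left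
  have hc : Qf.mul v (Qf.star v) ⊓ Qf.e ≤ H.sppX x := by
    refine le_inf ?_ inf_le_right
    calc Qf.mul v (Qf.star v) ⊓ Qf.e ≤ Qf.mul v (Qf.star v) := inf_le_left
      _ ≤ Qf.mul (H.inner x t) (H.inner t x) := by
          refine mul_le_mul Qf hv ?_
          rw [← star_inner Qf H x t]
          exact star_mono Qf hv
      _ = H.inner (H.act (H.inner x t) t) x := (H.inner_act _ _ _).symm
      _ ≤ H.inner x x := inner_mono_left Qf H hxt x
  calc H.act v t ≤ H.act (Qf.mul (Qf.mul v (Qf.star v) ⊓ Qf.e) v) t :=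
        act_mono Qf H (le_c_mul Qf v) le_rfl
    _ = H.act (Qf.mul v (Qf.star v) ⊓ Qf.e) (H.act v t) := by rw [H.act_mul]
    _ ≤ H.act (H.sppX x) x :=
        act_mono Qf H hc (le_trans (act_mono Qf H hv le_rfl) hxt)

lemma hilbert_of_local {s : X} (hs : H.IsLocalSection s) (x : X) :
    H.act (H.inner x s) s ≤ x := by
  obtain ⟨S, hS⟩ := H.hasBasis
  have hG : ∀ t ∈ S, H.act (H.inner t s) s ≤ t := by
    intro t ht
    have htHilb : ∀ z : X, H.act (H.inner z t) t ≤ z := by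
      intro z
      conv_rhs => rw [hS z]
      exact le_iSup₂ (f := fun t (_ : t ∈ S) => H.act (H.inner z t) t) t ht
    have hdec : H.inner t s =
        ⨆ u ∈ {w : Q | Qf.mul w (Qf.star w) ≤ Qf.e ∧ Qf.mul (Qf.star w) w ≤ Qf.e},
          H.inner t s ⊓ u := by
      rw [← inf_sSup_eq, Qf.sSup_PU, inf_top_eq]
    rw [hdec, act_biSup]
    apply iSup₂_le
    intro u hu
    set v := H.inner t s ⊓ u with hv_def
    have hv : v ≤ H.inner t s := inf_le_left
    have hvstar : Qf.star v ≤ H.inner s t := by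
      rw [← star_inner Qf H t s]
      exact star_mono Qf hv
    have hvv_e : Qf.mul (Qf.star v) v ≤ Qf.e :=
      le_trans (mul_le_mul Qf (star_mono Qf inf_le_right) inf_le_right) hu.2
    have hvvs_e : Qf.mul v (Qf.star v) ≤ Qf.e :=
      le_trans (mul_le_mul Qf inf_le_right (star_mono Qf inf_le_right)) hu.1
    set y := H.act (Qf.star v) t with hy_def
    have hy : y ≤ s := le_trans (act_mono Qf H hvstar le_rfl) (htHilb s)
    have hys : H.act (H.sppX y) s = y := hs y hy
    -- v ≤ ⟨t,t⟩ v
    have hts : H.inner t s = Qf.mul (H.sppX t) (H.inner t s) := by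
      conv_lhs => rw [← act_sppX Qf H t]
      rw [H.inner_act]
    have hvtop : v ≤ Qf.mul (H.sppX t) ⊤ := by
      refine le_trans hv ?_
      rw [hts]
      exact mul_le_mul Qf le_rfl le_top
    have hc : Qf.mul v (Qf.star v) ⊓ Qf.e ≤ H.sppX t := by
      have h1 : Qf.mul v (Qf.star v) ≤ Qf.mul (H.sppX t) ⊤ := by
        calc Qf.mul v (Qf.star v) ≤ Qf.mul (Qf.mul (H.sppX t) ⊤) (Qf.star v) :=
              mul_le_mul Qf hvtop le_rfl
          _ = Qf.mul (H.sppX t) (Qf.mul ⊤ (Qf.star v)) := Qf.mul_assoc _ _ _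
          _ ≤ Qf.mul (H.sppX t) ⊤ := mul_le_mul Qf le_rfl le_top
      calc Qf.mul v (Qf.star v) ⊓ Qf.e ≤ Qf.mul (H.sppX t) ⊤ ⊓ Qf.e := inf_le_inf_right _ h1
        _ = Qf.mul (Qf.mul (H.sppX t) ⊤) ⊤ ⊓ Qf.e := by rw [Qf.mul_assoc, mul_top_top]
        _ ≤ Qf.supp (Qf.mul (H.sppX t) ⊤) := mul_top_inf_e_le_supp Qf _
        _ = Qf.mul (H.sppX t) (Qf.supp ⊤) := Qf.supp_stable _ _ inf_le_right
        _ = H.sppX t := by rw [supp_top, Qf.mul_e]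
    have hvtt : v ≤ Qf.mul (H.inner t t) v := by
      calc v ≤ Qf.mul (Qf.mul v (Qf.star v) ⊓ Qf.e) v := le_c_mul Qf v
        _ ≤ Qf.mul (H.sppX t) v := mul_le_mul Qf hc le_rfl
        _ ≤ Qf.mul (H.inner t t) v := mul_le_mul Qf inf_le_left le_rfl
    have hb : Qf.mul (Qf.star v) v ≤ H.sppX y := by
      refine le_inf ?_ hvv_e
      have hyy : H.inner y y = Qf.mul (Qf.star v) (Qf.mul (H.inner t t) v) := by
        rw [hy_def, H.inner_act, inner_act_right, Qf.star_star]
      rw [hyy]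
      exact mul_le_mul Qf le_rfl hvtt
    have hvvvs : v ≤ Qf.mul v (Qf.mul (Qf.star v) v) := by
      calc v ≤ Qf.mul (Qf.mul v (Qf.star v) ⊓ Qf.e) v := le_c_mul Qf v
        _ ≤ Qf.mul (Qf.mul v (Qf.star v)) v := mul_le_mul Qf inf_le_left le_rfl
        _ = Qf.mul v (Qf.mul (Qf.star v) v) := Qf.mul_assoc _ _ _
    calc H.act v s ≤ H.act (Qf.mul v (Qf.mul (Qf.star v) v)) s := act_mono Qf H hvvvs le_rfl
      _ = H.act v (H.act (Qf.mul (Qf.star v) v) s) := by rw [H.act_mul]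
      _ ≤ H.act v (H.act (H.sppX y) s) := act_mono Qf H le_rfl (act_mono Qf H hb le_rfl)
      _ = H.act v y := by rw [hys]
      _ = H.act (Qf.mul v (Qf.star v)) t := by rw [hy_def, ← H.act_mul]
      _ ≤ t := anchor_le Qf H hvvs_e t
  have hdx : H.inner x s = ⨆ t ∈ S, Qf.mul (H.inner x t) (H.inner t s) := by
    conv_lhs => rw [hS x]
    rw [inner_biSup]
    exact iSup_congr fun t => iSup_congr fun ht => H.inner_act _ _ _
  rw [hdx, act_biSup]
  apply iSup₂_le
  intro t ht
  rw [H.act_mul]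
  refine le_trans (act_mono Qf H le_rfl (hG t ht)) ?_
  conv_rhs => rw [hS x]
  exact le_iSup₂ (f := fun t (_ : t ∈ S) => H.act (H.inner x t) t) t ht

lemma act_inner_self {s : X} (hs : H.IsLocalSection s) : H.act (H.inner s s) s = s := by
  refine le_antisymm (hilbert_of_local Qf H hs s) ?_
  conv_lhs => rw [← act_sppX Qf H s]
  exact act_mono Qf H inf_le_left le_rfl

lemma supp_inner_self {s : X} (hs : H.IsLocalSection s) :
    Qf.supp (H.inner s s) = H.sppX s := by
  have hmul : Qf.mul (H.inner s s) (H.inner s s) = H.inner s s := by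
    rw [← H.inner_act, act_inner_self Qf H hs]
  rw [supp_eq, star_inner, hmul]
  rfl

end XLemmas

end Stmt9Aux
/-- Equivalent characterizations of a principal section of a
`Q`-sheaf. -/
theorem stmt9 {Q X : Type*} [Order.Frame Q] [Order.Frame X]
    (Qf : InverseQuantalFrame Q) (H : QSheaf Qf X)
    (s : X) (hs : H.IsLocalSection s) :
    List.TFAE
      [H.inner s s ≤ Qf.e,
       H.sppX s = H.inner s s,
       ∀ a, H.act a s = s → Qf.mul a (H.sppX s) = H.sppX s,
       ∀ a, Qf.supp (Qf.star a) = H.sppX s → H.act a s = s → a ≤ Qf.e] := by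
  open Stmt9Aux in
  tfae_have 1 → 2 := by
    intro h1
    exact inf_eq_left.mpr h1
  tfae_have 2 → 3 := by
    intro h2 a ha
    rw [h2, ← H.inner_act, ha]
  tfae_have 3 → 4 := by
    intro h3 a hsupp ha
    have h1 : Qf.star a ≤ Qf.mul (Qf.supp (Qf.star a)) (Qf.star a) := Qf.le_supp_mul _
    have h2 : a ≤ Qf.mul a (Qf.supp (Qf.star a)) := by
      have hst := star_mono Qf h1
      rwa [Qf.star_star, Qf.star_mul, Qf.star_star,
        star_of_le_e Qf (Qf.supp_le_e _)] at hst
    rw [hsupp, h3 a ha] at h2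
    exact le_trans h2 inf_le_right
  tfae_have 4 → 1 := by
    intro h4
    exact h4 (H.inner s s)
      (by rw [star_inner, supp_inner_self Qf H hs])
      (act_inner_self Qf H hs)
  tfae_finish
end
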